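/- For the grid graph G(m,n) = P_m □ P_n with m,n ≥ 2, MEG(G(m,n)) = 2(m+n−2), and the unique minimum MEG-set is the set of boundary vertices of the grid. -/

import Mathlib

open SimpleGraph

/-- Two vertices `x` and `y` monitor an edge `e` in `G`: there is a shortest path between
them, and `e` lies on every shortest path between `x` and `y`. -/
def Monitors {V : Type*} (G : SimpleGraph V) (x y : V) (e : Sym2 V) : Prop :=
  (∃ p : G.Walk x y, p.IsPath ∧ p.length = G.dist x y) ∧
    ∀ p : G.Walk x y, p.IsPath → p.length = G.dist x y → e ∈ p.edges

/-- `S` is a monitoring edge-geodetic set of `G`. -/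
def IsMEGSet {V : Type*} (G : SimpleGraph V) (S : Set V) : Prop :=
  ∀ e ∈ G.edgeSet, ∃ x ∈ S, ∃ y ∈ S, Monitors G x y e

/-- The minimum size of a monitoring edge-geodetic set of `G`. -/
noncomputable def megNum {V : Type*} (G : SimpleGraph V) : ℕ :=
  sInf {n | ∃ S : Set V, IsMEGSet G S ∧ S.ncard = n}

/-- The set of leaves (degree-1 vertices) of `G`. -/
def leaves {V : Type*} (G : SimpleGraph V) : Set V :=
  {v | (G.neighborSet v).ncard = 1}


-- lower bound on walk lengths in grid
private lemma grid_len_lb {m n : ℕ} {x y : Fin m × Fin n}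
    (p : (pathGraph m □ pathGraph n).Walk x y) :
    (x.1.val - y.1.val) + (y.1.val - x.1.val)
      + ((x.2.val - y.2.val) + (y.2.val - x.2.val)) ≤ p.length := by
  induction p with
  | nil => omega
  | cons h q ih =>
    rw [Walk.length_cons]
    rcases boxProd_adj.mp h with ⟨h1, h2⟩ | ⟨h1, h2⟩
    · rw [pathGraph_adj] at h1
      have h2' := congrArg Fin.val h2
      omega
    · rw [pathGraph_adj] at h1
      have h2' := congrArg Fin.val h2
      omega

private lemma pwalk_ex (m : ℕ) : ∀ (k i : ℕ) (h : i + k < m),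
    ∃ p : (pathGraph m).Walk ⟨i, by omega⟩ ⟨i + k, h⟩,
      p.length = k ∧ ∀ z ∈ p.support, i ≤ z.val ∧ z.val ≤ i + k
  | 0, i, h => ⟨Walk.nil, by simp, by intro z hz; simp [Walk.support_nil] at hz; subst hz; simp⟩
  | (k+1), i, h => by
    obtain ⟨p, hl, hs⟩ := pwalk_ex m k i (by omega)
    have hadj : (pathGraph m).Adj ⟨i+k, by omega⟩ ⟨i+(k+1), h⟩ := pathGraph_adj.mpr (Or.inl rfl)
    refine ⟨p.concat hadj, by simp [Walk.length_concat, hl], ?_⟩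
    intro z hz
    rw [Walk.support_concat, List.mem_append] at hz
    rcases hz with hz | hz
    · have := hs z hz; omega
    · simp only [List.mem_singleton] at hz; subst hz; simp

private lemma hwalk_ex_le {m n : ℕ} (a c : Fin m) (b : Fin n) (hac : a.val ≤ c.val) :
    ∃ p : (pathGraph m □ pathGraph n).Walk (a, b) (c, b),
      p.length = (a.val - c.val) + (c.val - a.val) ∧
      ∀ z ∈ p.support, z.2 = b ∧ min a.val c.val ≤ z.1.val ∧ z.1.val ≤ max a.val c.val := by
  obtain ⟨p0, hl, hs⟩ := pwalk_ex m (c.val - a.val) a.val (by omega)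
  have ha : (⟨a.val, by omega⟩ : Fin m) = a := rfl
  have hc : (⟨a.val + (c.val - a.val), by omega⟩ : Fin m) = c := Fin.ext (by simp only [Fin.val_mk]; omega)
  refine ⟨(p0.copy ha hc).map ((SimpleGraph.boxProdLeft (pathGraph m) (pathGraph n) b).toHom),
    ?_, ?_⟩
  · have hlm := Walk.length_map (f := (SimpleGraph.boxProdLeft (pathGraph m) (pathGraph n) b).toHom) (p := (p0.copy ha hc))
    rw [Walk.length_copy, hl] at hlm
    exact hlm.trans (by omega)
  · intro z hz
    replace hz : z ∈ (p0.copy ha hc).support.map (SimpleGraph.boxProdLeft (pathGraph m) (pathGraph n) b).toHom := by rw [← Walk.support_map]; exact hz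
    rw [Walk.support_copy, List.mem_map] at hz
    obtain ⟨u, hu, huz⟩ := hz
    have := hs u hu
    subst huz
    have hrfl : (SimpleGraph.boxProdLeft (pathGraph m) (pathGraph n) b).toHom u = (u, b) := rfl
    rw [hrfl]
    refine ⟨rfl, ?_, ?_⟩ <;>
    · simp only [Prod.fst, Prod.snd, Fin.val_mk] at this ⊢
      omega

private lemma hwalk_ex {m n : ℕ} (a c : Fin m) (b : Fin n) :
    ∃ p : (pathGraph m □ pathGraph n).Walk (a, b) (c, b),
      p.length = (a.val - c.val) + (c.val - a.val) ∧
      ∀ z ∈ p.support, z.2 = b ∧ min a.val c.val ≤ z.1.val ∧ z.1.val ≤ max a.val c.val := by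
  rcases le_total a.val c.val with hac | hac
  · exact hwalk_ex_le a c b hac
  · obtain ⟨p, hl, hs⟩ := hwalk_ex_le c a b hac
    refine ⟨p.reverse, ?_, ?_⟩
    · rw [Walk.length_reverse, hl]; omega
    · intro z hz
      rw [Walk.support_reverse, List.mem_reverse] at hz
      have := hs z hz
      exact ⟨this.1, by omega, by omega⟩

private lemma vwalk_ex_le {m n : ℕ} (a : Fin m) (b c : Fin n) (hbc : b.val ≤ c.val) :
    ∃ p : (pathGraph m □ pathGraph n).Walk (a, b) (a, c),
      p.length = (b.val - c.val) + (c.val - b.val) ∧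
      ∀ z ∈ p.support, z.1 = a ∧ min b.val c.val ≤ z.2.val ∧ z.2.val ≤ max b.val c.val := by
  obtain ⟨p0, hl, hs⟩ := pwalk_ex n (c.val - b.val) b.val (by omega)
  have hb : (⟨b.val, by omega⟩ : Fin n) = b := rfl
  have hc : (⟨b.val + (c.val - b.val), by omega⟩ : Fin n) = c := Fin.ext (by simp only [Fin.val_mk]; omega)
  refine ⟨(p0.copy hb hc).map ((SimpleGraph.boxProdRight (pathGraph m) (pathGraph n) a).toHom),
    ?_, ?_⟩
  · have hlm := Walk.length_map (f := (SimpleGraph.boxProdRight (pathGraph m) (pathGraph n) a).toHom) (p := (p0.copy hb hc))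
    rw [Walk.length_copy, hl] at hlm
    exact hlm.trans (by omega)
  · intro z hz
    replace hz : z ∈ (p0.copy hb hc).support.map (SimpleGraph.boxProdRight (pathGraph m) (pathGraph n) a).toHom := by rw [← Walk.support_map]; exact hz
    rw [Walk.support_copy, List.mem_map] at hz
    obtain ⟨u, hu, huz⟩ := hz
    have := hs u hu
    subst huz
    have hrfl : (SimpleGraph.boxProdRight (pathGraph m) (pathGraph n) a).toHom u = (a, u) := rfl
    rw [hrfl]
    refine ⟨rfl, ?_, ?_⟩ <;>
    · simp only [Prod.fst, Prod.snd, Fin.val_mk] at this ⊢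
      omega

private lemma vwalk_ex {m n : ℕ} (a : Fin m) (b c : Fin n) :
    ∃ p : (pathGraph m □ pathGraph n).Walk (a, b) (a, c),
      p.length = (b.val - c.val) + (c.val - b.val) ∧
      ∀ z ∈ p.support, z.1 = a ∧ min b.val c.val ≤ z.2.val ∧ z.2.val ≤ max b.val c.val := by
  rcases le_total b.val c.val with hbc | hbc
  · exact vwalk_ex_le a b c hbc
  · obtain ⟨p, hl, hs⟩ := vwalk_ex_le a c b hbc
    refine ⟨p.reverse, ?_, ?_⟩
    · rw [Walk.length_reverse, hl]; omega
    · intro z hz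
      rw [Walk.support_reverse, List.mem_reverse] at hz
      have := hs z hz
      exact ⟨this.1, by omega, by omega⟩

private lemma grid_conn {m n : ℕ} (hm : 1 ≤ m) (hn : 1 ≤ n) :
    (pathGraph m □ pathGraph n).Connected := by
  obtain ⟨m', rfl⟩ : ∃ m', m = m' + 1 := ⟨m - 1, by omega⟩
  obtain ⟨n', rfl⟩ : ∃ n', n = n' + 1 := ⟨n - 1, by omega⟩
  exact (pathGraph_connected m').boxProd (pathGraph_connected n')

private lemma grid_dist {m n : ℕ} (hm : 1 ≤ m) (hn : 1 ≤ n) (x y : Fin m × Fin n) :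
    (pathGraph m □ pathGraph n).dist x y
      = (x.1.val - y.1.val) + (y.1.val - x.1.val)
        + ((x.2.val - y.2.val) + (y.2.val - x.2.val)) := by
  obtain ⟨p, hp⟩ := (grid_conn hm hn).exists_walk_length_eq_dist x y
  have lb := grid_len_lb p
  obtain ⟨p1, h1l, _⟩ := hwalk_ex (n := n) x.1 y.1 x.2
  obtain ⟨p2, h2l, _⟩ := vwalk_ex (m := m) y.1 x.2 y.2
  have ub : (pathGraph m □ pathGraph n).dist x y ≤ (p1.append p2).length :=
    SimpleGraph.dist_le _
  rw [Walk.length_append] at ub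
  omega

private lemma isPath_of_len_eq_dist {V : Type*} [DecidableEq V] {G : SimpleGraph V} {u v : V} (p : G.Walk u v)
    (h : p.length = G.dist u v) : p.IsPath := by
  induction p with
  | nil => simp
  | @cons u w v ha q ih =>
    rw [Walk.length_cons] at h
    have hd : G.dist u v ≤ q.length + 1 := h ▸ le_refl _
    have hq : q.length = G.dist w v := by
      refine le_antisymm ?_ (SimpleGraph.dist_le q)
      by_contra hlt
      push_neg at hlt
      obtain ⟨r, hr⟩ := (Walk.reachable q).exists_walk_length_eq_dist
      have := SimpleGraph.dist_le (Walk.cons ha r)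
      rw [Walk.length_cons, hr] at this
      omega
    rw [Walk.cons_isPath_iff]
    refine ⟨ih hq, fun hmem => ?_⟩
    have h1 := SimpleGraph.dist_le (q.dropUntil u hmem)
    have h2 := Walk.length_dropUntil_le q hmem
    omega

private lemma forcedH {m n : ℕ} {x y : Fin m × Fin n}
    (p : (pathGraph m □ pathGraph n).Walk x y) (hxy2 : x.2 = y.2)
    (hle : x.1.val ≤ y.1.val) (hlen : p.length = y.1.val - x.1.val) :
    ∀ (i : ℕ) (hi : i < m) (hi1 : i + 1 < m), x.1.val ≤ i → i + 1 ≤ y.1.val →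
      s((⟨i, hi⟩, x.2), (⟨i+1, hi1⟩, x.2)) ∈ p.edges := by
  induction p with
  | nil =>
    intro i _ _ h1 h2
    omega
  | @cons u w v ha q ih =>
    intro i hi hi1 h1 h2
    have lb := grid_len_lb q
    rw [Walk.length_cons] at hlen
    have hy2 : u.2.val = v.2.val := congrArg Fin.val hxy2
    rcases boxProd_adj.mp ha with ⟨had, heq⟩ | ⟨had, heq⟩
    · rw [pathGraph_adj] at had
      have heq' : u.2.val = w.2.val := congrArg Fin.val heq
      rcases had with hplus | hminus
      · -- w.1 = u.1 + 1
        by_cases hcase : i = u.1.val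
        · have hx : ((⟨i, hi⟩ : Fin m), u.2) = u := Prod.ext (Fin.ext (by simp only [Prod.fst, Prod.snd, Fin.val_mk]; omega)) rfl
          have hw : ((⟨i+1, hi1⟩ : Fin m), u.2) = w := Prod.ext (Fin.ext (by simp only [Prod.fst, Prod.snd, Fin.val_mk]; omega)) heq
          rw [Walk.edges_cons, hx, hw]
          exact List.mem_cons_self
        · have hw2 : w.2 = v.2 := heq ▸ hxy2
          have hres := ih hw2 (by omega) (by omega) i hi hi1 (by omega) h2
          rw [Walk.edges_cons]
          rw [heq]
          exact List.mem_cons_of_mem _ hres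
      · exfalso; omega
    · exfalso
      rw [pathGraph_adj] at had
      have heq' : u.1.val = w.1.val := congrArg Fin.val heq
      omega

private lemma forcedV {m n : ℕ} {x y : Fin m × Fin n}
    (p : (pathGraph m □ pathGraph n).Walk x y) (hxy1 : x.1 = y.1)
    (hle : x.2.val ≤ y.2.val) (hlen : p.length = y.2.val - x.2.val) :
    ∀ (j : ℕ) (hj : j < n) (hj1 : j + 1 < n), x.2.val ≤ j → j + 1 ≤ y.2.val →
      s((x.1, ⟨j, hj⟩), (x.1, ⟨j+1, hj1⟩)) ∈ p.edges := by
  induction p with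
  | nil =>
    intro j _ _ h1 h2
    omega
  | @cons u w v ha q ih =>
    intro j hj hj1 h1 h2
    have lb := grid_len_lb q
    rw [Walk.length_cons] at hlen
    have hy1 : u.1.val = v.1.val := congrArg Fin.val hxy1
    rcases boxProd_adj.mp ha with ⟨had, heq⟩ | ⟨had, heq⟩
    · exfalso
      rw [pathGraph_adj] at had
      have heq' : u.2.val = w.2.val := congrArg Fin.val heq
      omega
    · rw [pathGraph_adj] at had
      have heq' : u.1.val = w.1.val := congrArg Fin.val heq
      rcases had with hplus | hminus
      · by_cases hcase : j = u.2.val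
        · have hx : (u.1, (⟨j, hj⟩ : Fin n)) = u := Prod.ext rfl (Fin.ext (by simp only [Prod.fst, Prod.snd, Fin.val_mk]; omega))
          have hw : (u.1, (⟨j+1, hj1⟩ : Fin n)) = w := Prod.ext heq (Fin.ext (by simp only [Prod.fst, Prod.snd, Fin.val_mk]; omega))
          rw [Walk.edges_cons, hx, hw]
          exact List.mem_cons_self
        · have hw1 : w.1 = v.1 := heq ▸ hxy1
          have hres := ih hw1 (by omega) (by omega) j hj hj1 (by omega) h2
          rw [Walk.edges_cons]
          rw [heq]
          exact List.mem_cons_of_mem _ hres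
      · exfalso; omega

private lemma mon_row {m n : ℕ} (hm : 1 ≤ m) (hn : 1 ≤ n) (b : Fin n)
    (a0 a1 c0 c1 : Fin m) (h0 : a0.val = 0) (h1 : a1.val = m - 1) (hc : c0.val + 1 = c1.val) :
    Monitors (pathGraph m □ pathGraph n) (a0, b) (a1, b) s((c0, b), (c1, b)) := by
  have hd := grid_dist hm hn (a0, b) (a1, b)
  simp only [Prod.fst, Prod.snd] at hd
  constructor
  · obtain ⟨p, hl, _⟩ := hwalk_ex (n := n) a0 a1 b
    exact ⟨p, isPath_of_len_eq_dist p (by omega), by omega⟩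
  · intro p hp hplen
    have hlt : c1.val < m := c1.isLt
    have h := forcedH p rfl (by simp only [Prod.fst, Prod.snd]; omega)
      (by simp only [Prod.fst, Prod.snd]; omega) c0.val c0.isLt (by omega)
      (by simp only [Prod.fst, Prod.snd]; omega) (by simp only [Prod.fst, Prod.snd]; omega)
    have e0 : (⟨c0.val, c0.isLt⟩ : Fin m) = c0 := Fin.ext rfl
    have e1 : (⟨c0.val + 1, by omega⟩ : Fin m) = c1 := Fin.ext hc
    rw [e0, e1] at h
    exact h

private lemma mon_col {m n : ℕ} (hm : 1 ≤ m) (hn : 1 ≤ n) (a : Fin m)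
    (b0 b1 c0 c1 : Fin n) (h0 : b0.val = 0) (h1 : b1.val = n - 1) (hc : c0.val + 1 = c1.val) :
    Monitors (pathGraph m □ pathGraph n) (a, b0) (a, b1) s((a, c0), (a, c1)) := by
  have hd := grid_dist hm hn (a, b0) (a, b1)
  simp only [Prod.fst, Prod.snd] at hd
  constructor
  · obtain ⟨p, hl, _⟩ := vwalk_ex (m := m) a b0 b1
    exact ⟨p, isPath_of_len_eq_dist p (by omega), by omega⟩
  · intro p hp hplen
    have hlt : c1.val < n := c1.isLt
    have h := forcedV p rfl (by simp only [Prod.fst, Prod.snd]; omega)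
      (by simp only [Prod.fst, Prod.snd]; omega) c0.val c0.isLt (by omega)
      (by simp only [Prod.fst, Prod.snd]; omega) (by simp only [Prod.fst, Prod.snd]; omega)
    have e0 : (⟨c0.val, c0.isLt⟩ : Fin n) = c0 := Fin.ext rfl
    have e1 : (⟨c0.val + 1, by omega⟩ : Fin n) = c1 := Fin.ext hc
    rw [e0, e1] at h
    exact h

private lemma boundary_meg {m n : ℕ} (hm : 2 ≤ m) (hn : 2 ≤ n) :
    IsMEGSet (pathGraph m □ pathGraph n)
      {q : Fin m × Fin n | q.1.val = 0 ∨ q.1.val = m - 1 ∨ q.2.val = 0 ∨ q.2.val = n - 1} := by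
  intro e he
  revert he
  induction e using Sym2.ind with
  | _ u w =>
  intro he
  rw [mem_edgeSet] at he
  have hm1 : 1 ≤ m := by omega
  have hn1 : 1 ≤ n := by omega
  rcases boxProd_adj.mp he with ⟨had, heq⟩ | ⟨had, heq⟩
  · rw [pathGraph_adj] at had
    have hweq : ((w.1, u.2) : Fin m × Fin n) = w := Prod.ext rfl heq
    rcases had with hp | hp
    · refine ⟨(⟨0, by omega⟩, u.2), Or.inl rfl, (⟨m-1, by omega⟩, u.2), Or.inr (Or.inl rfl), ?_⟩
      have hmon := mon_row hm1 hn1 u.2 ⟨0, by omega⟩ ⟨m-1, by omega⟩ u.1 w.1 rfl rfl hp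
      rw [hweq, Prod.mk.eta] at hmon
      exact hmon
    · refine ⟨(⟨0, by omega⟩, u.2), Or.inl rfl, (⟨m-1, by omega⟩, u.2), Or.inr (Or.inl rfl), ?_⟩
      have hmon := mon_row hm1 hn1 u.2 ⟨0, by omega⟩ ⟨m-1, by omega⟩ w.1 u.1 rfl rfl hp
      rw [hweq, Prod.mk.eta] at hmon
      rw [Sym2.eq_swap]
      exact hmon
  · rw [pathGraph_adj] at had
    have hweq : ((u.1, w.2) : Fin m × Fin n) = w := Prod.ext heq rfl
    rcases had with hp | hp
    · refine ⟨(u.1, ⟨0, by omega⟩), Or.inr (Or.inr (Or.inl rfl)),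
        (u.1, ⟨n-1, by omega⟩), Or.inr (Or.inr (Or.inr rfl)), ?_⟩
      have hmon := mon_col hm1 hn1 u.1 ⟨0, by omega⟩ ⟨n-1, by omega⟩ u.2 w.2 rfl rfl hp
      rw [hweq, Prod.mk.eta] at hmon
      exact hmon
    · refine ⟨(u.1, ⟨0, by omega⟩), Or.inr (Or.inr (Or.inl rfl)),
        (u.1, ⟨n-1, by omega⟩), Or.inr (Or.inr (Or.inr rfl)), ?_⟩
      have hmon := mon_col hm1 hn1 u.1 ⟨0, by omega⟩ ⟨n-1, by omega⟩ w.2 u.2 rfl rfl hp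
      rw [hweq, Prod.mk.eta] at hmon
      rw [Sym2.eq_swap]
      exact hmon

private lemma vert_mon {m n : ℕ} (hm : 1 ≤ m) (hn : 1 ≤ n) {x y : Fin m × Fin n}
    {a : Fin m} {b c : Fin n} (hbc : b.val + 1 = c.val)
    (hmon : Monitors (pathGraph m □ pathGraph n) x y s((a, b), (a, c))) :
    x.1 = a ∧ y.1 = a ∧ min x.2.val y.2.val ≤ b.val ∧ c.val ≤ max x.2.val y.2.val := by
  obtain ⟨x1, x2⟩ := x
  obtain ⟨y1, y2⟩ := y
  have hd := grid_dist hm hn (x1, x2) (y1, y2)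
  simp only [Prod.fst, Prod.snd] at hd ⊢
  by_cases hxy1 : x1 = y1
  · subst hxy1
    obtain ⟨p, hl, hs⟩ := vwalk_ex (m := m) x1 x2 y2
    have hpath := isPath_of_len_eq_dist p (by omega)
    have he := hmon.2 p hpath (by omega)
    have h1 := p.fst_mem_support_of_mem_edges he
    have h2 := p.snd_mem_support_of_mem_edges he
    obtain ⟨ha1, hb1, hb2⟩ := hs _ h1
    obtain ⟨ha2, hc1, hc2⟩ := hs _ h2
    simp only [Prod.fst, Prod.snd] at ha1 hb1 hb2 hc1 hc2
    exact ⟨ha1.symm, ha1.symm, hb1, hc2⟩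
  · exfalso
    have hax1 : a = x1 := by
      obtain ⟨p1, hl1, hs1⟩ := vwalk_ex (m := m) x1 x2 y2
      obtain ⟨p2, hl2, hs2⟩ := hwalk_ex (n := n) x1 y1 y2
      have hpath := isPath_of_len_eq_dist (p1.append p2)
        (by rw [Walk.length_append]; omega)
      have he := hmon.2 (p1.append p2) hpath (by rw [Walk.length_append]; omega)
      rw [Walk.edges_append, List.mem_append] at he
      rcases he with he | he
      · have h1 := p1.fst_mem_support_of_mem_edges he
        obtain ⟨ha1, _, _⟩ := hs1 _ h1
        simpa using ha1
      · have h1 := p2.fst_mem_support_of_mem_edges he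
        have h2 := p2.snd_mem_support_of_mem_edges he
        obtain ⟨hb1, _, _⟩ := hs2 _ h1
        obtain ⟨hb2, _, _⟩ := hs2 _ h2
        exfalso
        have e1 : b.val = y2.val := congrArg Fin.val hb1
        have e2 : c.val = y2.val := congrArg Fin.val hb2
        omega
    have hay1 : a = y1 := by
      obtain ⟨p1, hl1, hs1⟩ := hwalk_ex (n := n) x1 y1 x2
      obtain ⟨p2, hl2, hs2⟩ := vwalk_ex (m := m) y1 x2 y2
      have hpath := isPath_of_len_eq_dist (p1.append p2)
        (by rw [Walk.length_append]; omega)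
      have he := hmon.2 (p1.append p2) hpath (by rw [Walk.length_append]; omega)
      rw [Walk.edges_append, List.mem_append] at he
      rcases he with he | he
      · have h1 := p1.fst_mem_support_of_mem_edges he
        have h2 := p1.snd_mem_support_of_mem_edges he
        obtain ⟨hb1, _, _⟩ := hs1 _ h1
        obtain ⟨hb2, _, _⟩ := hs1 _ h2
        exfalso
        have e1 : b.val = x2.val := congrArg Fin.val hb1
        have e2 : c.val = x2.val := congrArg Fin.val hb2
        omega
      · have h1 := p2.fst_mem_support_of_mem_edges he
        obtain ⟨ha1, _, _⟩ := hs2 _ h1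
        simpa using ha1
    exact hxy1 (hax1 ▸ hay1)

private lemma horiz_mon {m n : ℕ} (hm : 1 ≤ m) (hn : 1 ≤ n) {x y : Fin m × Fin n}
    {a : Fin n} {b c : Fin m} (hbc : b.val + 1 = c.val)
    (hmon : Monitors (pathGraph m □ pathGraph n) x y s((b, a), (c, a))) :
    x.2 = a ∧ y.2 = a ∧ min x.1.val y.1.val ≤ b.val ∧ c.val ≤ max x.1.val y.1.val := by
  obtain ⟨x1, x2⟩ := x
  obtain ⟨y1, y2⟩ := y
  have hd := grid_dist hm hn (x1, x2) (y1, y2)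
  simp only [Prod.fst, Prod.snd] at hd ⊢
  by_cases hxy2 : x2 = y2
  · subst hxy2
    obtain ⟨p, hl, hs⟩ := hwalk_ex (n := n) x1 y1 x2
    have hpath := isPath_of_len_eq_dist p (by omega)
    have he := hmon.2 p hpath (by omega)
    have h1 := p.fst_mem_support_of_mem_edges he
    have h2 := p.snd_mem_support_of_mem_edges he
    obtain ⟨ha1, hb1, hb2⟩ := hs _ h1
    obtain ⟨ha2, hc1, hc2⟩ := hs _ h2
    simp only [Prod.fst, Prod.snd] at ha1 hb1 hb2 hc1 hc2
    exact ⟨ha1.symm, ha1.symm, hb1, hc2⟩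
  · exfalso
    have hax1 : a = x2 := by
      obtain ⟨p1, hl1, hs1⟩ := hwalk_ex (n := n) x1 y1 x2
      obtain ⟨p2, hl2, hs2⟩ := vwalk_ex (m := m) y1 x2 y2
      have hpath := isPath_of_len_eq_dist (p1.append p2)
        (by rw [Walk.length_append]; omega)
      have he := hmon.2 (p1.append p2) hpath (by rw [Walk.length_append]; omega)
      rw [Walk.edges_append, List.mem_append] at he
      rcases he with he | he
      · have h1 := p1.fst_mem_support_of_mem_edges he
        obtain ⟨ha1, _, _⟩ := hs1 _ h1
        simpa using ha1
      · have h1 := p2.fst_mem_support_of_mem_edges he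
        have h2 := p2.snd_mem_support_of_mem_edges he
        obtain ⟨hb1, _, _⟩ := hs2 _ h1
        obtain ⟨hb2, _, _⟩ := hs2 _ h2
        exfalso
        have e1 : b.val = y1.val := congrArg Fin.val hb1
        have e2 : c.val = y1.val := congrArg Fin.val hb2
        omega
    have hay1 : a = y2 := by
      obtain ⟨p1, hl1, hs1⟩ := vwalk_ex (m := m) x1 x2 y2
      obtain ⟨p2, hl2, hs2⟩ := hwalk_ex (n := n) x1 y1 y2
      have hpath := isPath_of_len_eq_dist (p1.append p2)
        (by rw [Walk.length_append]; omega)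
      have he := hmon.2 (p1.append p2) hpath (by rw [Walk.length_append]; omega)
      rw [Walk.edges_append, List.mem_append] at he
      rcases he with he | he
      · have h1 := p1.fst_mem_support_of_mem_edges he
        have h2 := p1.snd_mem_support_of_mem_edges he
        obtain ⟨hb1, _, _⟩ := hs1 _ h1
        obtain ⟨hb2, _, _⟩ := hs1 _ h2
        exfalso
        have e1 : b.val = x1.val := congrArg Fin.val hb1
        have e2 : c.val = x1.val := congrArg Fin.val hb2
        omega
      · have h1 := p2.fst_mem_support_of_mem_edges he
        obtain ⟨ha1, _, _⟩ := hs2 _ h1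
        simpa using ha1
    exact hxy2 (hax1 ▸ hay1)

private lemma boundary_subset {m n : ℕ} (hm : 2 ≤ m) (hn : 2 ≤ n)
    (S : Set (Fin m × Fin n)) (hS : IsMEGSet (pathGraph m □ pathGraph n) S) :
    {q : Fin m × Fin n | q.1.val = 0 ∨ q.1.val = m - 1 ∨ q.2.val = 0 ∨ q.2.val = n - 1} ⊆ S := by
  have hm1 : 1 ≤ m := by omega
  have hn1 : 1 ≤ n := by omega
  rintro ⟨v1, v2⟩ hv
  rcases hv with h | h | h | h
  · -- v1 = 0 : horizontal edge from (0, v2) to (1, v2)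
    replace h : v1.val = 0 := h
    have hadj : (pathGraph m □ pathGraph n).Adj (⟨0, by omega⟩, v2) (⟨1, by omega⟩, v2) :=
      boxProd_adj.mpr (Or.inl ⟨pathGraph_adj.mpr (Or.inl rfl), rfl⟩)
    obtain ⟨x, hxS, y, hyS, hmon⟩ := hS _ ((mem_edgeSet _).mpr hadj)
    obtain ⟨hx2, hy2, hmin, _⟩ := horiz_mon hm1 hn1 (by simp) hmon
    replace hmin : min x.1.val y.1.val ≤ 0 := hmin
    rcases (by omega : x.1.val = 0 ∨ y.1.val = 0) with h0 | h0
    · exact (Prod.ext (Fin.ext (show x.1.val = v1.val by omega)) hx2 : x = (v1, v2)) ▸ hxS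
    · exact (Prod.ext (Fin.ext (show y.1.val = v1.val by omega)) hy2 : y = (v1, v2)) ▸ hyS
  · -- v1 = m - 1
    replace h : v1.val = m - 1 := h
    have hadj : (pathGraph m □ pathGraph n).Adj (⟨m-2, by omega⟩, v2) (⟨m-1, by omega⟩, v2) :=
      boxProd_adj.mpr (Or.inl ⟨pathGraph_adj.mpr (Or.inl (show m - 2 + 1 = m - 1 by omega)),
        rfl⟩)
    obtain ⟨x, hxS, y, hyS, hmon⟩ := hS _ ((mem_edgeSet _).mpr hadj)
    obtain ⟨hx2, hy2, _, hmax⟩ := horiz_mon hm1 hn1 (show m - 2 + 1 = m - 1 by omega) hmon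
    replace hmax : m - 1 ≤ max x.1.val y.1.val := hmax
    have hx1 : x.1.val < m := x.1.isLt
    have hy1 : y.1.val < m := y.1.isLt
    rcases (by omega : x.1.val = m - 1 ∨ y.1.val = m - 1) with h0 | h0
    · exact (Prod.ext (Fin.ext (show x.1.val = v1.val by omega)) hx2 : x = (v1, v2)) ▸ hxS
    · exact (Prod.ext (Fin.ext (show y.1.val = v1.val by omega)) hy2 : y = (v1, v2)) ▸ hyS
  · -- v2 = 0
    replace h : v2.val = 0 := h
    have hadj : (pathGraph m □ pathGraph n).Adj (v1, ⟨0, by omega⟩) (v1, ⟨1, by omega⟩) :=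
      boxProd_adj.mpr (Or.inr ⟨pathGraph_adj.mpr (Or.inl rfl), rfl⟩)
    obtain ⟨x, hxS, y, hyS, hmon⟩ := hS _ ((mem_edgeSet _).mpr hadj)
    obtain ⟨hx1, hy1, hmin, _⟩ := vert_mon hm1 hn1 (by simp) hmon
    replace hmin : min x.2.val y.2.val ≤ 0 := hmin
    rcases (by omega : x.2.val = 0 ∨ y.2.val = 0) with h0 | h0
    · exact (Prod.ext hx1 (Fin.ext (show x.2.val = v2.val by omega)) : x = (v1, v2)) ▸ hxS
    · exact (Prod.ext hy1 (Fin.ext (show y.2.val = v2.val by omega)) : y = (v1, v2)) ▸ hyS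
  · -- v2 = n - 1
    replace h : v2.val = n - 1 := h
    have hadj : (pathGraph m □ pathGraph n).Adj (v1, ⟨n-2, by omega⟩) (v1, ⟨n-1, by omega⟩) :=
      boxProd_adj.mpr (Or.inr ⟨pathGraph_adj.mpr (Or.inl (show n - 2 + 1 = n - 1 by omega)),
        rfl⟩)
    obtain ⟨x, hxS, y, hyS, hmon⟩ := hS _ ((mem_edgeSet _).mpr hadj)
    obtain ⟨hx1, hy1, _, hmax⟩ := vert_mon hm1 hn1 (show n - 2 + 1 = n - 1 by omega) hmon
    replace hmax : n - 1 ≤ max x.2.val y.2.val := hmax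
    have hx2 : x.2.val < n := x.2.isLt
    have hy2 : y.2.val < n := y.2.isLt
    rcases (by omega : x.2.val = n - 1 ∨ y.2.val = n - 1) with h0 | h0
    · exact (Prod.ext hx1 (Fin.ext (show x.2.val = v2.val by omega)) : x = (v1, v2)) ▸ hxS
    · exact (Prod.ext hy1 (Fin.ext (show y.2.val = v2.val by omega)) : y = (v1, v2)) ▸ hyS

private lemma line_card (m : ℕ) (hm : 2 ≤ m) :
    (Finset.univ.filter (fun i : Fin m => ¬(i.val = 0 ∨ i.val = m - 1))).card = m - 2 := by
  have h2 : (Finset.univ.filter (fun i : Fin m => i.val = 0 ∨ i.val = m - 1)).card = 2 := by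
    have heq : (Finset.univ.filter (fun i : Fin m => i.val = 0 ∨ i.val = m - 1))
        = {⟨0, by omega⟩, ⟨m - 1, by omega⟩} := by
      ext i
      simp [Fin.ext_iff]
    rw [heq]
    rw [Finset.card_insert_of_notMem (by simp [Fin.ext_iff]; omega), Finset.card_singleton]
  have hkey := Finset.card_filter_add_card_filter_not
      (p := fun i : Fin m => i.val = 0 ∨ i.val = m - 1) (s := Finset.univ)
  rw [Finset.card_univ, Fintype.card_fin] at hkey
  omega

private lemma boundary_card {m n : ℕ} (hm : 2 ≤ m) (hn : 2 ≤ n) :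
    ({q : Fin m × Fin n | q.1.val = 0 ∨ q.1.val = m - 1 ∨ q.2.val = 0 ∨ q.2.val = n - 1}).ncard
      = 2 * (m + n - 2) := by
  rw [Set.ncard_eq_toFinset_card']
  rw [Set.toFinset_setOf]
  have hkey := Finset.card_filter_add_card_filter_not
    (p := fun q : Fin m × Fin n =>
      q.1.val = 0 ∨ q.1.val = m - 1 ∨ q.2.val = 0 ∨ q.2.val = n - 1) (s := Finset.univ)
  have hprod : (Finset.univ.filter (fun q : Fin m × Fin n =>
      ¬(q.1.val = 0 ∨ q.1.val = m - 1 ∨ q.2.val = 0 ∨ q.2.val = n - 1))).card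
      = (m - 2) * (n - 2) := by
    have heq : (Finset.univ.filter (fun q : Fin m × Fin n =>
        ¬(q.1.val = 0 ∨ q.1.val = m - 1 ∨ q.2.val = 0 ∨ q.2.val = n - 1)))
        = (Finset.univ.filter (fun i : Fin m => ¬(i.val = 0 ∨ i.val = m - 1))) ×ˢ
          (Finset.univ.filter (fun j : Fin n => ¬(j.val = 0 ∨ j.val = n - 1))) := by
      ext ⟨i, j⟩
      simp only [Finset.mem_filter, Finset.mem_product, Finset.mem_univ, true_and]
      tauto
    rw [heq, Finset.card_product, line_card m hm, line_card n hn]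
  rw [Finset.card_univ, Fintype.card_prod, Fintype.card_fin, Fintype.card_fin] at hkey
  rw [hprod] at hkey
  obtain ⟨a, rfl⟩ : ∃ a, m = a + 2 := ⟨m - 2, by omega⟩
  obtain ⟨b, rfl⟩ : ∃ b, n = b + 2 := ⟨n - 2, by omega⟩
  have hs1 : a + 2 - 2 = a := by omega
  have hs2 : b + 2 - 2 = b := by omega
  rw [hs1, hs2] at hkey
  have hmn : (a + 2) * (b + 2) = a * b + 2 * a + 2 * b + 4 := by ring
  rw [hmn] at hkey
  have hcv : ∀ c : ℕ, c = a * b →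
      (Finset.univ.filter (fun q : Fin (a+2) × Fin (b+2) =>
        q.1.val = 0 ∨ q.1.val = a + 2 - 1 ∨ q.2.val = 0 ∨ q.2.val = b + 2 - 1)).card
        = 2 * (a + 2 + (b + 2) - 2) := by
    intro c hc
    rw [← hc] at hkey
    omega
  exact hcv (a * b) rfl

theorem grid_MEG (m n : ℕ) (hm : 2 ≤ m) (hn : 2 ≤ n) :
    megNum (pathGraph m □ pathGraph n) = 2 * (m + n - 2) ∧
    IsMEGSet (pathGraph m □ pathGraph n)
      {q : Fin m × Fin n | q.1.val = 0 ∨ q.1.val = m - 1 ∨ q.2.val = 0 ∨ q.2.val = n - 1} ∧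
    ∀ S : Set (Fin m × Fin n), IsMEGSet (pathGraph m □ pathGraph n) S →
      {q : Fin m × Fin n | q.1.val = 0 ∨ q.1.val = m - 1 ∨ q.2.val = 0 ∨ q.2.val = n - 1} ⊆ S := by
  have hB2 := boundary_meg hm hn
  have hB3 := boundary_subset hm hn
  refine ⟨?_, hB2, hB3⟩
  have hcard := boundary_card hm hn
  unfold megNum
  apply le_antisymm
  · exact Nat.sInf_le ⟨_, hB2, hcard⟩
  · refine le_csInf ⟨_, _, hB2, hcard⟩ ?_
    rintro k ⟨S, hSmeg, rfl⟩
    rw [← hcard]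
    exact Set.ncard_le_ncard (hB3 S hSmeg) (Set.toFinite S)
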